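/- Let p = [b_1^{a_1} ⋯ b_r^{a_r}] (b_1 ≥ ⋯ ≥ b_r) be an orthogonal partition of 2n+1 with a_r = b_r = 1 and with b_i even for all 1 ≤ i ≤ r−1. Then n* = 0, and with P := [p_1 p_1 (2n*)] = [p_1 p_1] one has the exact identity P^t = p^-; in particular (P^t)_{Sp_{2n}} = (p^-)_{Sp_{2n}}. -/

import Mathlib

namespace JiangWF

/-- `sCount p i` : the number of parts of `p` that are `≥ i`. -/
def sCount (p : Multiset ℕ) (i : ℕ) : ℕ := (p.filter (fun a => i ≤ a)).card

/-- `rCount p i` : the number of parts of `p` equal to `i`. -/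
def rCount (p : Multiset ℕ) (i : ℕ) : ℕ := p.count i

/-- The largest part of `p` (`0` for the empty partition). -/
def maxPart (p : Multiset ℕ) : ℕ := p.sup

/-- The smallest part of `p` (`0` for the empty partition). -/
noncomputable def minPart (p : Multiset ℕ) : ℕ := sInf {a : ℕ | a ∈ p}

/-- The transpose partition: its `i`-th part is `sCount p i`, for `1 ≤ i ≤ maxPart p`. -/
def transpose (p : Multiset ℕ) : Multiset ℕ :=
  (Multiset.range (maxPart p)).map fun i => sCount p (i + 1)

/-- The sum of the `m` largest parts of `p`. -/
def topSum (p : Multiset ℕ) (m : ℕ) : ℕ :=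
  ∑ i ∈ Finset.Icc 1 p.sum, min m (sCount p i)

/-- Dominance order: `domLE p q` means `p ≤ q`. -/
def domLE (p q : Multiset ℕ) : Prop := ∀ m, topSum p m ≤ topSum q m

/-- `p` is a partition of `N`: all parts positive, summing to `N`. -/
def IsPartitionOf (p : Multiset ℕ) (N : ℕ) : Prop := (∀ a ∈ p, 0 < a) ∧ p.sum = N

/-- Symplectic partition: every odd part occurs with even multiplicity. -/
def IsSymplectic (p : Multiset ℕ) : Prop := ∀ a, a % 2 = 1 → Even (p.count a)

/-- Orthogonal partition: every even part occurs with even multiplicity. -/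
def IsOrthogonal (p : Multiset ℕ) : Prop := ∀ a, a % 2 = 0 → Even (p.count a)

/-- `p^-`: decrease the smallest part by one (deleting it if it becomes `0`). -/
noncomputable def pMinus (p : Multiset ℕ) : Multiset ℕ :=
  if minPart p ≤ 1 then p.erase (minPart p)
  else (minPart p - 1) ::ₘ p.erase (minPart p)

/-- `p^+`: increase the largest part by one. -/
def pPlus (p : Multiset ℕ) : Multiset ℕ := (maxPart p + 1) ::ₘ p.erase (maxPart p)

/-- `p^{+-}`: increase the largest part by one and decrease the smallest by one. -/
noncomputable def pPM (p : Multiset ℕ) : Multiset ℕ := pMinus (pPlus p)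

/-- `p₁ = [⌊b_1/2⌋^{a_1} ⋯ ⌊b_r/2⌋^{a_r}]^t` (discarding zero entries before transposing). -/
def pOne (p : Multiset ℕ) : Multiset ℕ :=
  transpose ((p.map fun b => b / 2).filter fun x => 0 < x)

/-- `Σ_{i : b_i odd} a_i`: the number of odd parts of `p`. -/
def oddMult (p : Multiset ℕ) : ℕ := (p.filter fun a => a % 2 = 1).card

/-- `n* = ⌊(Σ_{i : b_i odd} a_i)/2⌋`. -/
def nStar (p : Multiset ℕ) : ℕ := oddMult p / 2

/-- Append an extra part `m` to `q`, omitted if `m = 0`. -/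
def addPart (m : ℕ) (q : Multiset ℕ) : Multiset ℕ := if m = 0 then q else m ::ₘ q

/-- `c` is the `Sp`-collapse of `p`: the maximal symplectic partition `≤ p` in dominance. -/
def IsSpCollapse (p c : Multiset ℕ) : Prop :=
  IsPartitionOf c p.sum ∧ IsSymplectic c ∧ domLE c p ∧
    ∀ c', IsPartitionOf c' p.sum → IsSymplectic c' → domLE c' p → domLE c' c

/-- `c` is the `SO`-collapse of `p`: the maximal orthogonal partition `≤ p` in dominance. -/
def IsSOCollapse (p c : Multiset ℕ) : Prop :=
  IsPartitionOf c p.sum ∧ IsOrthogonal c ∧ domLE c p ∧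
    ∀ c', IsPartitionOf c' p.sum → IsOrthogonal c' → domLE c' p → domLE c' c

/-- `e` is the `Sp`-expansion of `p`: the minimal special symplectic partition `≥ p`. -/
def IsSpExpansion (p e : Multiset ℕ) : Prop :=
  IsPartitionOf e p.sum ∧ IsSymplectic e ∧ IsSymplectic (transpose e) ∧ domLE p e ∧
    ∀ e', IsPartitionOf e' p.sum → IsSymplectic e' → IsSymplectic (transpose e') →
      domLE p e' → domLE e e'

/-- `e` is the `SO_{2n+1}`-expansion of `p`: the minimal special orthogonal partition `≥ p`
(odd case: special means the transpose is orthogonal). -/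
def IsSOOddExpansion (p e : Multiset ℕ) : Prop :=
  IsPartitionOf e p.sum ∧ IsOrthogonal e ∧ IsOrthogonal (transpose e) ∧ domLE p e ∧
    ∀ e', IsPartitionOf e' p.sum → IsOrthogonal e' → IsOrthogonal (transpose e') →
      domLE p e' → domLE e e'

/-- `e` is the `SO_{2n}`-expansion of `p`: the minimal special orthogonal partition `≥ p`
(even case: special means the transpose is symplectic). -/
def IsSOEvenExpansion (p e : Multiset ℕ) : Prop :=
  IsPartitionOf e p.sum ∧ IsOrthogonal e ∧ IsSymplectic (transpose e) ∧ domLE p e ∧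
    ∀ e', IsPartitionOf e' p.sum → IsOrthogonal e' → IsSymplectic (transpose e') →
      domLE p e' → domLE e e'

/-- `dim_C(q)` for a symplectic partition `q` of `2k`:
`2k² + k − (1/2)Σ s_i(q)² − (1/2)Σ_{i odd} r_i(q)` (note `2k² + k = (|q|² + |q|)/2`). -/
def dimC (p : Multiset ℕ) : ℚ :=
  ((p.sum : ℚ) ^ 2 + (p.sum : ℚ)) / 2
    - (∑ i ∈ Finset.Icc 1 p.sum, (sCount p i : ℚ) ^ 2) / 2
    - (∑ i ∈ Finset.Icc 1 p.sum, if i % 2 = 1 then (rCount p i : ℚ) else 0) / 2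

/-- `dim_B(q)` for an orthogonal partition `q` of `2k+1`:
`2k² + k − (1/2)Σ s_i(q)² + (1/2)Σ_{i odd} r_i(q)` (note `2k² + k = (|q|² − |q|)/2`). -/
def dimB (p : Multiset ℕ) : ℚ :=
  ((p.sum : ℚ) ^ 2 - (p.sum : ℚ)) / 2
    - (∑ i ∈ Finset.Icc 1 p.sum, (sCount p i : ℚ) ^ 2) / 2
    + (∑ i ∈ Finset.Icc 1 p.sum, if i % 2 = 1 then (rCount p i : ℚ) else 0) / 2

/-- `dim_D(q)` for an orthogonal partition `q` of `2k`:
`2k² − k − (1/2)Σ s_i(q)² + (1/2)Σ_{i odd} r_i(q)` (note `2k² − k = (|q|² − |q|)/2`). -/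
def dimD (p : Multiset ℕ) : ℚ :=
  ((p.sum : ℚ) ^ 2 - (p.sum : ℚ)) / 2
    - (∑ i ∈ Finset.Icc 1 p.sum, (sCount p i : ℚ) ^ 2) / 2
    + (∑ i ∈ Finset.Icc 1 p.sum, if i % 2 = 1 then (rCount p i : ℚ) else 0) / 2


lemma sCount_cons (a : ℕ) (p : Multiset ℕ) (i : ℕ) :
    sCount (a ::ₘ p) i = (if i ≤ a then 1 else 0) + sCount p i := by
  simp only [sCount, Multiset.filter_cons]
  split <;> simp [Multiset.card_cons] <;> omega

lemma sCount_antitone (p : Multiset ℕ) {i j : ℕ} (h : i ≤ j) : sCount p j ≤ sCount p i := by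
  apply Multiset.card_le_card
  apply Multiset.monotone_filter_right
  intro a ha; omega

lemma sCount_pos_iff (p : Multiset ℕ) {k : ℕ} (hk : 1 ≤ k) :
    1 ≤ sCount p k ↔ k ≤ maxPart p := by
  constructor
  · intro h
    obtain ⟨a, ha⟩ := Multiset.card_pos_iff_exists_mem.mp h
    have := Multiset.mem_filter.mp ha
    exact le_trans this.2 (Multiset.le_sup this.1)
  · intro h
    by_contra hc
    simp only [sCount] at hc
    push_neg at hc
    have hall : ∀ a ∈ p, a ≤ k - 1 := by
      intro a ha
      by_contra h2
      push_neg at h2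
      have hm : a ∈ p.filter (fun a => k ≤ a) := Multiset.mem_filter.mpr ⟨ha, by omega⟩
      have := Multiset.card_pos_iff_exists_mem.mpr ⟨a, hm⟩
      omega
    have hs : p.sup ≤ k - 1 := Multiset.sup_le.mpr hall
    simp only [maxPart] at h
    omega

lemma scount_count (p : Multiset ℕ) (a : ℕ) :
    sCount p a = p.count a + sCount p (a + 1) := by
  induction p using Multiset.induction with
  | empty => simp [sCount]
  | cons b s ih =>
    rw [sCount_cons, sCount_cons, Multiset.count_cons, ih]
    have : (if a ≤ b then (1:ℕ) else 0) = (if a = b then 1 else 0) + (if a + 1 ≤ b then 1 else 0) := by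
      split_ifs <;> omega
    omega

/-- extensionality via sCount, for multisets of positive naturals -/
lemma ext_sCount {p q : Multiset ℕ} (hp : ∀ a ∈ p, 0 < a) (hq : ∀ a ∈ q, 0 < a)
    (h : ∀ i, 1 ≤ i → sCount p i = sCount q i) : p = q := by
  have hc : ∀ a, 1 ≤ a → p.count a = q.count a := by
    intro a ha
    have h1 := scount_count p a
    have h2 := scount_count q a
    have := h a ha
    have := h (a+1) (by omega)
    omega
  ext a
  rcases Nat.eq_zero_or_pos a with h0 | h0
  · subst h0
    rw [Multiset.count_eq_zero_of_notMem, Multiset.count_eq_zero_of_notMem]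
    · intro hm; exact absurd rfl (Nat.ne_of_gt (hq 0 hm))
    · intro hm; exact absurd rfl (Nat.ne_of_gt (hp 0 hm))
  · exact hc a h0

lemma eq_of_forall_one_le_iff {x y : ℕ} (h : ∀ k, 1 ≤ k → (k ≤ x ↔ k ≤ y)) : x = y := by
  apply le_antisymm
  · rcases Nat.eq_zero_or_pos x with h0 | h0
    · omega
    · exact (h x h0).mp le_rfl
  · rcases Nat.eq_zero_or_pos y with h0 | h0
    · omega
    · exact (h y h0).mpr le_rfl

lemma mem_iff_lt_card_of_downclosed (S : Finset ℕ) (h : ∀ a b : ℕ, a ≤ b → b ∈ S → a ∈ S)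
    (j : ℕ) : j ∈ S ↔ j < S.card := by
  constructor
  · intro hj
    have hsub : Finset.range (j+1) ⊆ S := by
      intro i hi
      exact h i j (by simpa using Nat.lt_succ_iff.mp (Finset.mem_range.mp hi)) hj
    have := Finset.card_le_card hsub
    simpa using this
  · intro hj
    by_contra hc
    have hsub : S ⊆ Finset.range j := by
      intro l hl
      rw [Finset.mem_range]
      by_contra h2
      exact hc (h j l (by omega) hl)
    have := Finset.card_le_card hsub
    simp at this
    omega

lemma sCount_transpose (X : Multiset ℕ) (i : ℕ) :
    sCount (transpose X) i
      = ((Finset.range (maxPart X)).filter (fun j => i ≤ sCount X (j+1))).card := by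
  simp only [sCount, transpose, Multiset.filter_map, Multiset.card_map]
  rfl

lemma duality (X : Multiset ℕ) {i k : ℕ} (hi : 1 ≤ i) (hk : 1 ≤ k) :
    k ≤ sCount (transpose X) i ↔ i ≤ sCount X k := by
  rw [sCount_transpose]
  set S := (Finset.range (maxPart X)).filter (fun j => i ≤ sCount X (j+1)) with hS
  have hdc : ∀ a b : ℕ, a ≤ b → b ∈ S → a ∈ S := by
    intro a b hab hb
    rw [hS, Finset.mem_filter, Finset.mem_range] at *
    exact ⟨by omega, le_trans hb.2 (sCount_antitone X (by omega))⟩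
  have hmem := mem_iff_lt_card_of_downclosed S hdc (k-1)
  have hcard : k ≤ S.card ↔ k - 1 ∈ S := by rw [hmem]; omega
  rw [hcard, hS, Finset.mem_filter, Finset.mem_range]
  have hk1 : k - 1 + 1 = k := by omega
  rw [hk1]
  constructor
  · exact fun h => h.2
  · intro h
    refine ⟨?_, h⟩
    have : 1 ≤ sCount X k := le_trans hi h
    have := (sCount_pos_iff X hk).mp this
    omega

lemma transpose_pos (X : Multiset ℕ) : ∀ a ∈ transpose X, 0 < a := by
  intro a ha
  simp only [transpose, Multiset.mem_map, Multiset.mem_range] at ha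
  obtain ⟨j, hj, rfl⟩ := ha
  exact (sCount_pos_iff X (by omega)).mpr (by omega)

lemma transpose_transpose (X : Multiset ℕ) (hX : ∀ a ∈ X, 0 < a) :
    transpose (transpose X) = X := by
  apply ext_sCount (transpose_pos _) hX
  intro i hi
  apply eq_of_forall_one_le_iff
  intro k hk
  rw [duality _ hi hk, duality _ hk hi]

lemma maxPart_map_double (Q : Multiset ℕ) :
    maxPart (Q.map (fun a => 2 * a)) = 2 * maxPart Q := by
  induction Q using Multiset.induction with
  | empty => simp [maxPart]
  | cons b s ih =>
    simp only [Multiset.map_cons, maxPart, Multiset.sup_cons] at *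
    rw [ih]
    rcases le_total b s.sup with h | h
    · rw [sup_eq_right.mpr h, sup_eq_right.mpr (by omega : 2 * b ≤ 2 * s.sup)]
    · rw [sup_eq_left.mpr h, sup_eq_left.mpr (by omega : 2 * s.sup ≤ 2 * b)]

lemma sCount_map_double (Q : Multiset ℕ) (i : ℕ) :
    sCount (Q.map (fun a => 2 * a)) i = sCount Q ((i + 1) / 2) := by
  simp only [sCount, Multiset.filter_map, Multiset.card_map]
  congr 1
  apply Multiset.filter_congr
  intro a _
  simp only [Function.comp]
  constructor <;> intro h <;> omega

lemma range_double (M : ℕ) :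
    Multiset.range (2 * M)
      = (Multiset.range M).map (fun j => 2 * j) + (Multiset.range M).map (fun j => 2 * j + 1) := by
  induction M with
  | zero => simp
  | succ n ih =>
    have h2 : 2 * (n + 1) = (2 * n + 1) + 1 := by ring
    rw [h2, Multiset.range_succ, Multiset.range_succ, ih, Multiset.range_succ]
    simp only [Multiset.map_cons, Multiset.cons_add, Multiset.add_cons]

lemma transpose_map_double (Q : Multiset ℕ) :
    transpose (Q.map (fun a => 2 * a)) = transpose Q + transpose Q := by
  simp only [transpose, maxPart_map_double]
  rw [range_double]
  rw [Multiset.map_add, Multiset.map_map, Multiset.map_map]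
  congr 1 <;>
  · apply Multiset.map_congr rfl
    intro j _
    simp only [Function.comp, sCount_map_double]
    congr 1
    omega

lemma topSum_succ (p : Multiset ℕ) (m : ℕ) :
    topSum p (m + 1)
      = topSum p m + ((Finset.Icc 1 p.sum).filter (fun i => m + 1 ≤ sCount p i)).card := by
  simp only [topSum, Finset.card_filter]
  rw [← Finset.sum_add_distrib]
  apply Finset.sum_congr rfl
  intro i _
  split <;> omega

lemma part_le_sum {p : Multiset ℕ} {a : ℕ} (ha : a ∈ p) : a ≤ p.sum :=
  Multiset.single_le_sum (fun x _ => Nat.zero_le x) a ha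

lemma sCount_eq_zero {p : Multiset ℕ} {i : ℕ} (h : p.sum < i) : sCount p i = 0 := by
  simp only [sCount, Multiset.card_eq_zero]
  rw [Multiset.filter_eq_nil]
  intro a ha
  have := part_le_sum ha
  omega

lemma sCount_le_of_cards {p q : Multiset ℕ} (hsum : p.sum = q.sum)
    (hF : ∀ m, 1 ≤ m →
      ((Finset.Icc 1 p.sum).filter (fun i => m ≤ sCount p i)).card
        = ((Finset.Icc 1 q.sum).filter (fun i => m ≤ sCount q i)).card)
    {i : ℕ} (hi : 1 ≤ i) : sCount p i ≤ sCount q i := by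
  set m := sCount p i with hm
  rcases Nat.eq_zero_or_pos m with h0 | h0
  · omega
  rcases le_or_gt i p.sum with hiN | hiN
  · have hsub : Finset.Icc 1 i ⊆ (Finset.Icc 1 p.sum).filter (fun i' => m ≤ sCount p i') := by
      intro i' hi'
      rw [Finset.mem_Icc] at hi'
      rw [Finset.mem_filter, Finset.mem_Icc]
      exact ⟨⟨hi'.1, by omega⟩, hm ▸ sCount_antitone p hi'.2⟩
    have h1 : i ≤ ((Finset.Icc 1 p.sum).filter (fun i' => m ≤ sCount p i')).card := by
      have := Finset.card_le_card hsub
      simpa using this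
    rw [hF m h0] at h1
    by_contra hc
    push_neg at hc
    have hsub2 : (Finset.Icc 1 q.sum).filter (fun i' => m ≤ sCount q i') ⊆
        Finset.Icc 1 (i - 1) := by
      intro i' hi'
      rw [Finset.mem_filter, Finset.mem_Icc] at hi'
      rw [Finset.mem_Icc]
      refine ⟨hi'.1.1, ?_⟩
      by_contra h2
      push_neg at h2
      have := sCount_antitone q (show i ≤ i' by omega)
      omega
    have := Finset.card_le_card hsub2
    simp [Nat.card_Icc] at this
    omega
  · have := sCount_eq_zero hiN
    omega

lemma dom_antisymm {p q : Multiset ℕ} (hp : ∀ a ∈ p, 0 < a) (hq : ∀ a ∈ q, 0 < a)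
    (hsum : p.sum = q.sum) (h1 : domLE p q) (h2 : domLE q p) : p = q := by
  have htop : ∀ m, topSum p m = topSum q m := fun m => le_antisymm (h1 m) (h2 m)
  have hF : ∀ m, 1 ≤ m →
      ((Finset.Icc 1 p.sum).filter (fun i => m ≤ sCount p i)).card
        = ((Finset.Icc 1 q.sum).filter (fun i => m ≤ sCount q i)).card := by
    intro m hm
    obtain ⟨k, rfl⟩ : ∃ k, m = k + 1 := ⟨m - 1, by omega⟩
    have ha := topSum_succ p k
    have hb := topSum_succ q k
    have := htop k
    have := htop (k + 1)
    omega
  apply ext_sCount hp hq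
  intro i hi
  have hF' : ∀ m, 1 ≤ m →
      ((Finset.Icc 1 q.sum).filter (fun i => m ≤ sCount q i)).card
        = ((Finset.Icc 1 p.sum).filter (fun i => m ≤ sCount p i)).card :=
    fun m hm => (hF m hm).symm
  exact le_antisymm (sCount_le_of_cards hsum hF hi) (sCount_le_of_cards hsum.symm hF' hi)


/-- `p` an orthogonal partition of `2n+1` with `a_r = b_r = 1` (the smallest part
is `1` and occurs once) and all other parts even.  Then `n* = 0`, `P = [p₁ p₁]` satisfies
`P^t = p^-`, and in particular `(P^t)_{Sp_{2n}} = (p^-)_{Sp_{2n}}`. -/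
theorem transpose_eq_pMinus_of_even_parts (n : ℕ) (p : Multiset ℕ)
    (hp : IsPartitionOf p (2 * n + 1)) (horth : IsOrthogonal p)
    (h1 : p.count 1 = 1) (heven : ∀ a ∈ p, a ≠ 1 → a % 2 = 0) :
    nStar p = 0 ∧ transpose (pOne p + pOne p) = pMinus p ∧
      ∀ c₁ c₂ : Multiset ℕ, IsSpCollapse (transpose (pOne p + pOne p)) c₁ →
        IsSpCollapse (pMinus p) c₂ → c₁ = c₂ := by
  classical
  set q := p.erase 1 with hqdef
  have h1p : (1 : ℕ) ∈ p := by
    rw [← Multiset.count_pos, h1]; omega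
  have hpq : p = 1 ::ₘ q := (Multiset.cons_erase h1p).symm
  have hq1 : (1 : ℕ) ∉ q := by
    have : q.count 1 = p.count 1 - 1 := Multiset.count_erase_self 1 p
    rw [h1] at this
    rw [← Multiset.count_pos]
    omega
  have hqprop : ∀ a ∈ q, 2 ≤ a ∧ a % 2 = 0 := by
    intro a ha
    have hap : a ∈ p := Multiset.mem_of_mem_erase ha
    have hane : a ≠ 1 := fun h => hq1 (h ▸ ha)
    have he := heven a hap hane
    have := hp.1 a hap
    exact ⟨by omega, he⟩
  have hqpos : ∀ a ∈ q, 0 < a := fun a ha => by have := (hqprop a ha).1; omega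
  -- n* = 0
  have hnstar : nStar p = 0 := by
    have hfilter : p.filter (fun a => a % 2 = 1) = {1} := by
      rw [hpq, Multiset.filter_cons]
      have hqf : q.filter (fun a => a % 2 = 1) = 0 := by
        rw [Multiset.filter_eq_nil]
        intro a ha
        have := (hqprop a ha).2
        omega
      simp [hqf]
    simp [nStar, oddMult, hfilter]
  -- pMinus p = q
  have hmin : minPart p = 1 := by
    have hle : minPart p ≤ 1 := Nat.sInf_le h1p
    have hmem : minPart p ∈ p := Nat.sInf_mem (⟨1, h1p⟩ : Set.Nonempty {a : ℕ | a ∈ p})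
    have := hp.1 _ hmem
    omega
  have hpm : pMinus p = q := by
    rw [pMinus, hmin, if_pos le_rfl]
  -- pOne p = transpose Q
  set Q := q.map (fun b => b / 2) with hQdef
  have hY : (p.map (fun b => b / 2)).filter (fun x => 0 < x) = Q := by
    rw [hpq, Multiset.map_cons]
    norm_num
    rw [Multiset.filter_eq_self]
    intro a ha
    obtain ⟨b, hb, rfl⟩ := Multiset.mem_map.mp ha
    have := (hqprop b hb).1
    omega
  have hpOne : pOne p = transpose Q := by rw [pOne, hY]
  have hqQ : Q.map (fun a => 2 * a) = q := by
    rw [hQdef, Multiset.map_map]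
    have : ∀ b ∈ q, ((fun a => 2 * a) ∘ fun b => b / 2) b = id b := by
      intro b hb
      have := (hqprop b hb).2
      simp only [Function.comp, id]
      omega
    rw [Multiset.map_congr rfl this, Multiset.map_id]
  have hmain : transpose (pOne p + pOne p) = pMinus p := by
    rw [hpm, hpOne, ← transpose_map_double, hqQ, transpose_transpose q hqpos]
  refine ⟨hnstar, hmain, ?_⟩
  intro c₁ c₂ hc₁ hc₂
  rw [hmain] at hc₁
  have d21 := hc₁.2.2.2 c₂ hc₂.1 hc₂.2.1 hc₂.2.2.1
  have d12 := hc₂.2.2.2 c₁ hc₁.1 hc₁.2.1 hc₁.2.2.1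
  have hsum : c₁.sum = c₂.sum := by rw [hc₁.1.2, hc₂.1.2]
  exact dom_antisymm hc₁.1.1 hc₂.1.1 hsum d12 d21


end JiangWF
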